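/- Let φ : W_Θ\W → H_Θ satisfy conditions (i) and (ii) of the Whittaker Kazhdan–Lusztig algorithm (φ(C) = δ_C + Σ_{D<C} P_{CD} δ_D with P_{CD} ∈ qZ[q], and for Cs_α < C, T_α(φ(Cs_α)) is an integer combination of φ(D), D ≤ C). Then each polynomial satisfies the parity condition P_{CD} = q^{ℓ(w^C)−ℓ(w^D)} Q_{CD} for some Q_{CD} ∈ Z[q², q⁻²]; equivalently, P_{CD}(q) = (−1)^{ℓ(w^C)−ℓ(w^D)} P_{CD}(−q). -/

import Mathlib

open CoxeterSystem LaurentPolynomial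
open scoped Classical

noncomputable section

variable {B W : Type} [Group W]

/-- The (strict) Bruhat order on a Coxeter group: `x < y` iff `y` can be obtained from `x`
by successively multiplying on the right by reflections, each time increasing the length. -/
def BruhatLT {M : CoxeterMatrix B} (cs : CoxeterSystem M W) : W → W → Prop :=
  Relation.TransGen
    (fun a b => (∃ t : W, cs.IsReflection t ∧ b = a * t) ∧ cs.length a < cs.length b)

/-- The Bruhat order (non-strict). -/
def BruhatLE {M : CoxeterMatrix B} (cs : CoxeterSystem M W) (x y : W) : Prop :=
  BruhatLT cs x y ∨ x = y

/-- The type of right cosets `H\W`. -/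
abbrev RightCoset (H : Subgroup W) : Type _ := Quotient (QuotientGroup.rightRel H)

/-- The right coset `H * x`. -/
def rcMk (H : Subgroup W) (x : W) : RightCoset H := Quotient.mk _ x

/-- Right multiplication of a right coset by a group element. -/
def rcMul (H : Subgroup W) (C : RightCoset H) (g : W) : RightCoset H :=
  Quotient.map (fun x => x * g)
    (by
      intro a b hab
      have h' := (QuotientGroup.rightRel_apply).mp hab
      exact (QuotientGroup.rightRel_apply).mpr (by
        simpa [mul_assoc, mul_inv_rev] using h')) C

/-- The standard parabolic subgroup `W_Θ` generated by the simple reflections from `Θ`. -/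
def WP {M : CoxeterMatrix B} (cs : CoxeterSystem M W) (Θ : Set B) : Subgroup W :=
  Subgroup.closure (cs.simple '' Θ)

/-- Right multiplication of a coset in `W_Θ\W` by the simple reflection `s_α`. -/
def sAct {M : CoxeterMatrix B} (cs : CoxeterSystem M W) (Θ : Set B) :
    RightCoset (WP cs Θ) → B → RightCoset (WP cs Θ) :=
  fun C α => rcMul _ C (cs.simple α)

/-- The Laurent polynomial variable `q`. -/
def qq : LaurentPolynomial ℤ := T 1

/-- The Laurent polynomial `q⁻¹`. -/
def qqinv : LaurentPolynomial ℤ := T (-1)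

/-- A Laurent polynomial lies in `q·ℤ[q]`, i.e. all coefficients in degrees `≤ 0` vanish. -/
def InQZq (p : LaurentPolynomial ℤ) : Prop := ∀ n : ℤ, n ≤ 0 → p.coeff n = 0

/-- The operator `T_α` on the free `ℤ[q,q⁻¹]`-module with basis indexed by `κ`,
relative to a right action `act` of the simple reflections on `κ` and a choice
`wc` of (longest) representative of each index:
`T_α δ_C = 0` if `Cs_α = C`; `q δ_C + δ_{Cs_α}` if `Cs_α > C`;
`q⁻¹ δ_C + δ_{Cs_α}` if `Cs_α < C` (Bruhat order on the representatives). -/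
def Tmap {M : CoxeterMatrix B} (cs : CoxeterSystem M W) {κ : Type}
    (act : κ → B → κ) (wc : κ → W) (α : B) :
    (κ →₀ LaurentPolynomial ℤ) →ₗ[LaurentPolynomial ℤ] (κ →₀ LaurentPolynomial ℤ) :=
  Finsupp.linearCombination (LaurentPolynomial ℤ) fun C =>
    if act C α = C then 0
    else if BruhatLT cs (wc C) (wc (act C α)) then
      qq • Finsupp.single C 1 + Finsupp.single (act C α) 1
    else
      qqinv • Finsupp.single C 1 + Finsupp.single (act C α) 1

namespace StmtAux

variable {W : Type*} [Group W]

theorem conj_eq_iff (X Y u t : W) : X * t * Y = u ↔ t = X⁻¹ * u * Y⁻¹ := by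
  constructor
  · rintro rfl; group
  · rintro rfl; group

theorem inv_eq_self {a : W} (ha : a * a = 1) : a⁻¹ = a := by
  rw [← mul_eq_one_iff_inv_eq]; exact ha

/-- The sign-flipping involution attached to an involution `a`. -/
def etaFun (a : W) : W × ℤˣ → W × ℤˣ :=
  fun p => (a * p.1 * a, if p.1 = a then -p.2 else p.2)

theorem etaFun_cond {a t : W} (ha : a * a = 1) : (a * t * a = a) ↔ (t = a) := by
  rw [conj_eq_iff, inv_eq_self ha, ha, one_mul]

theorem etaFun_involutive {a : W} (ha : a * a = 1) : Function.Involutive (etaFun a) := by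
  rintro ⟨t, e⟩
  simp only [etaFun]
  refine Prod.ext ?_ ?_
  · show a * (a * t * a) * a = t
    calc a * (a * t * a) * a = a * a * t * (a * a) := by simp [mul_assoc]
    _ = t := by rw [ha]; simp
  · show (if a * t * a = a then -(if t = a then -e else e) else (if t = a then -e else e)) = e
    by_cases h : t = a
    · rw [if_pos ((etaFun_cond ha).mpr h), if_pos h]; simp
    · rw [if_neg (fun hc => h ((etaFun_cond ha).mp hc)), if_neg h]

/-- The sign-flipping permutation attached to an involution. -/
def eta (a : W) (ha : a * a = 1) : Equiv.Perm (W × ℤˣ) :=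
  (etaFun_involutive ha).toPerm

theorem eta_apply (a : W) (ha : a * a = 1) (t : W) (e : ℤˣ) :
    eta a ha (t, e) = (a * t * a, if t = a then -e else e) := rfl

section braid

variable {a b : W} (ha : a * a = 1) (hb : b * b = 1)

include ha hb

private theorem hpowinv (n : ℕ) : ((a*b)^n)⁻¹ = (b*a)^n := by
  rw [← inv_pow, mul_inv_rev, inv_eq_self ha, inv_eq_self hb]

private theorem hshift (n : ℕ) : b * (a*b)^n = (b*a)^n * b := by
  induction n with
  | zero => simp
  | succ n ih =>
    rw [pow_succ, ← mul_assoc, ih, pow_succ]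
    simp [mul_assoc]

private theorem key1 (k : ℕ) : (b*a)^k * b * (a*b)^k = (b*a)^(2*k) * b := by
  rw [mul_assoc, hshift ha hb, ← mul_assoc, ← pow_add, two_mul]

private theorem key2 (k : ℕ) : (b*a)^k * (b * a * b) * (a*b)^k = (b*a)^(2*k+1) * b := by
  have h1 : b * a * b * (a*b)^k = (b*a)^(k+1) * b := by
    calc b * a * b * (a*b)^k = (b*a) * (b * (a*b)^k) := by simp [mul_assoc]
    _ = (b*a) * ((b*a)^k * b) := by rw [hshift ha hb]
    _ = ((b*a) * (b*a)^k) * b := by rw [← mul_assoc]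
    _ = (b*a)^(k+1) * b := by rw [← pow_succ']
  calc (b*a)^k * (b * a * b) * (a*b)^k = (b*a)^k * (b * a * b * (a*b)^k) := by
        simp [mul_assoc]
  _ = (b*a)^k * ((b*a)^(k+1) * b) := by rw [h1]
  _ = (b*a)^k * (b*a)^(k+1) * b := by rw [mul_assoc]
  _ = (b*a)^(2*k+1) * b := by rw [← pow_add]; ring_nf

theorem cond1 (k : ℕ) (t : W) :
    ((a*b)^k * t * (b*a)^k = b) ↔ (t = (b*a)^(2*k) * b) := by
  rw [conj_eq_iff, hpowinv ha hb, hpowinv hb ha, key1 ha hb]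

theorem cond2 (k : ℕ) (t : W) :
    (b * ((a*b)^k * t * (b*a)^k) * b = a) ↔ (t = (b*a)^(2*k+1) * b) := by
  rw [conj_eq_iff b b a, inv_eq_self hb, conj_eq_iff, hpowinv ha hb, hpowinv hb ha, key2 ha hb]

theorem eta_mul_pow_apply (k : ℕ) (t : W) (e : ℤˣ) :
    ((eta a ha * eta b hb) ^ k) (t, e) =
      ((a*b)^k * t * (b*a)^k,
        e * ∏ r ∈ Finset.range (2*k), (if t = (b*a)^r * b then (-1 : ℤˣ) else 1)) := by
  induction k with
  | zero => simp
  | succ k ih =>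
    rw [pow_succ', Equiv.Perm.mul_apply, ih, Equiv.Perm.mul_apply, eta_apply, eta_apply]
    refine Prod.ext ?_ ?_
    · show a * (b * ((a*b)^k * t * (b*a)^k) * b) * a = (a*b)^(k+1) * t * (b*a)^(k+1)
      rw [pow_succ' (a*b), pow_succ (b*a)]
      simp [mul_assoc]
    · show (if b * ((a*b)^k * t * (b*a)^k) * b = a
            then -(if (a*b)^k * t * (b*a)^k = b then _ else _)
            else (if (a*b)^k * t * (b*a)^k = b then _ else _)) = _
      rw [show 2*(k+1) = 2*k + 1 + 1 by ring, Finset.prod_range_succ, Finset.prod_range_succ]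
      simp only [cond1 ha hb k t, cond2 ha hb k t]
      split_ifs <;> simp [mul_comm, mul_left_comm, mul_assoc]

theorem eta_braid (m : ℕ) (hm : (a * b) ^ m = 1) :
    (eta a ha * eta b hb) ^ m = 1 := by
  have hm' : (b * a) ^ m = 1 := by
    rw [← hpowinv ha hb, hm, inv_one]
  apply Equiv.ext
  rintro ⟨t, e⟩
  rw [eta_mul_pow_apply ha hb, hm, hm']
  refine Prod.ext (by simp) ?_
  show e * _ = e
  rw [two_mul, Finset.prod_range_add]
  have : ∀ r, (if t = (b*a)^(m + r) * b then (-1 : ℤˣ) else 1)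
      = (if t = (b*a)^r * b then (-1 : ℤˣ) else 1) := by
    intro r
    rw [pow_add, hm', one_mul]
  simp only [this]
  rw [← sq]
  simp

end braid

section coxeter

variable {B : Type*} {W : Type*} [Group W] {M : CoxeterMatrix B} (cs : CoxeterSystem M W)

/-- The reflection/sign permutation representation of a Coxeter group. -/
def signRep : W →* Equiv.Perm (W × ℤˣ) :=
  cs.lift ⟨fun i => eta (cs.simple i) (cs.simple_mul_simple_self i), by
    intro i j
    exact eta_braid (cs.simple_mul_simple_self i) (cs.simple_mul_simple_self j)
      (M i j) (cs.simple_mul_simple_pow i j)⟩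

theorem signRep_simple (i : B) :
    signRep cs (cs.simple i) = eta (cs.simple i) (cs.simple_mul_simple_self i) :=
  cs.lift_apply_simple _ i

theorem signRep_wordProd_inv (ω : List B) (t : W) (e : ℤˣ) :
    signRep cs (cs.wordProd ω)⁻¹ (t, e) =
      ((cs.wordProd ω)⁻¹ * t * cs.wordProd ω,
        e * (-1 : ℤˣ) ^ ((cs.leftInvSeq ω).count t)) := by
  induction ω generalizing t e with
  | nil => simp
  | cons i ω ih =>
    rw [cs.wordProd_cons, mul_inv_rev, map_mul, Equiv.Perm.mul_apply, cs.inv_simple,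
      signRep_simple, eta_apply, ih]
    refine Prod.ext ?_ ?_
    · show (cs.wordProd ω)⁻¹ * (cs.simple i * t * cs.simple i) * cs.wordProd ω = _
      simp [mul_assoc]
    · show (if t = cs.simple i then -e else e) * _ = e * _
      have hcount : (cs.leftInvSeq (i :: ω)).count t
          = ((if t = cs.simple i then 1 else 0) +
              (cs.leftInvSeq ω).count (cs.simple i * t * cs.simple i)) := by
        show ((cs.simple i :: List.map (⇑(MulAut.conj (cs.simple i))) (cs.leftInvSeq ω)).count t) = _
        rw [List.count_cons]
        have hinj : Function.Injective (⇑(MulAut.conj (cs.simple i))) :=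
          (MulAut.conj (cs.simple i)).injective
        have : t = cs.simple i * (cs.simple i * t * cs.simple i) * (cs.simple i)⁻¹ := by
          rw [cs.inv_simple]
          calc t = (cs.simple i * cs.simple i) * t * (cs.simple i * cs.simple i) := by
                rw [cs.simple_mul_simple_self]; simp
          _ = _ := by simp [mul_assoc]
        have hmap : (List.map (⇑(MulAut.conj (cs.simple i))) (cs.leftInvSeq ω)).count t
            = (cs.leftInvSeq ω).count (cs.simple i * t * cs.simple i) := by
          conv_lhs => rw [this]
          exact List.count_map_of_injective _ _ hinj _
        rw [hmap]
        by_cases h : t = cs.simple i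
        · subst h; simp [add_comm]
        · simp only [beq_iff_eq]
          rw [if_neg (fun hh => h hh.symm), if_neg h]
          omega
      rw [hcount, pow_add]
      by_cases h : t = cs.simple i <;> simp [h, mul_comm, mul_left_comm, mul_assoc]

/-- Parity of the number of occurrences of `t` in the left inversion sequence only
depends on the product of the word. -/
theorem count_leftInvSeq_parity {ω μ : List B} (h : cs.wordProd ω = cs.wordProd μ) (t : W) :
    (-1 : ℤˣ) ^ ((cs.leftInvSeq ω).count t) = (-1 : ℤˣ) ^ ((cs.leftInvSeq μ).count t) := by
  have h1 := signRep_wordProd_inv cs ω t 1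
  have h2 := signRep_wordProd_inv cs μ t 1
  rw [h] at h1
  rw [h1] at h2
  have := congrArg Prod.snd h2
  simpa using this

/-- Simple version of the exchange property. -/
theorem simple_mem_leftInvSeq {ω : List B} (hred : cs.IsReduced ω) {i : B}
    (hdesc : cs.IsLeftDescent (cs.wordProd ω) i) :
    cs.simple i ∈ cs.leftInvSeq ω := by
  obtain ⟨μ, hμlen, hμprod⟩ := cs.exists_reduced_word (cs.simple i * cs.wordProd ω)
  have hμred : cs.IsReduced μ := hμlen
  have hprod : cs.wordProd (i :: μ) = cs.wordProd ω := by
    rw [cs.wordProd_cons, ← hμprod, ← mul_assoc, cs.simple_mul_simple_self, one_mul]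
  have hnotmem : cs.simple i ∉ cs.leftInvSeq μ := by
    intro hmem
    have hinv := cs.isLeftInversion_of_mem_leftInvSeq hμred hmem
    rw [← hμprod] at hinv
    have h1 : cs.length (cs.simple i * (cs.simple i * cs.wordProd ω)) <
        cs.length (cs.simple i * cs.wordProd ω) := hinv.2
    rw [← mul_assoc, cs.simple_mul_simple_self, one_mul] at h1
    exact Nat.lt_asymm hdesc h1
  have hcount : (cs.leftInvSeq (i :: μ)).count (cs.simple i) = 1 := by
    show ((cs.simple i :: List.map (⇑(MulAut.conj (cs.simple i))) (cs.leftInvSeq μ)).count _) = 1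
    rw [List.count_cons]
    have : (List.map (⇑(MulAut.conj (cs.simple i))) (cs.leftInvSeq μ)).count (cs.simple i) = 0 := by
      rw [List.count_eq_zero]
      intro hmem
      obtain ⟨x, hx, hconj⟩ := List.mem_map.mp hmem
      apply hnotmem
      have hxi : x = cs.simple i := by
        have h2 := hconj
        simp only [MulAut.conj_apply, cs.inv_simple] at h2
        exact (etaFun_cond (cs.simple_mul_simple_self i)).mp h2
      rwa [hxi] at hx
    rw [this]
    simp
  have hpar := count_leftInvSeq_parity cs hprod (cs.simple i)
  rw [hcount] at hpar
  by_contra hnm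
  rw [List.count_eq_zero_of_not_mem hnm] at hpar
  simp at hpar

/-- The exchange property. -/
theorem exchange {ω : List B} (hred : cs.IsReduced ω) {i : B}
    (hdesc : cs.IsLeftDescent (cs.wordProd ω) i) :
    ∃ j, j < ω.length ∧ cs.simple i * cs.wordProd ω = cs.wordProd (ω.eraseIdx j) := by
  have hmem := simple_mem_leftInvSeq cs hred hdesc
  obtain ⟨j, hj, hgf⟩ := List.mem_iff_getElem.mp hmem
  rw [cs.length_leftInvSeq] at hj
  refine ⟨j, hj, ?_⟩
  rw [← cs.getD_leftInvSeq_mul_wordProd ω j]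
  congr 1
  rw [← hgf, List.getD_eq_getElem]

end coxeter

section parabolic

variable {B W : Type} [Group W] {M : CoxeterMatrix B} (cs : CoxeterSystem M W) (Θ : Set B)

theorem simple_mem_WP {β : B} (hβ : β ∈ Θ) : cs.simple β ∈ WP cs Θ :=
  Subgroup.subset_closure ⟨β, hβ, rfl⟩

theorem wordProd_mem_WP {ω : List B} (hω : ∀ b ∈ ω, b ∈ Θ) :
    cs.wordProd ω ∈ WP cs Θ := by
  induction ω with
  | nil => rw [cs.wordProd_nil]; exact one_mem _
  | cons β ω ih =>
    rw [cs.wordProd_cons]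
    exact mul_mem (simple_mem_WP cs Θ (hω β (by simp)))
      (ih (fun b hb => hω b (by simp [hb])))

theorem exists_theta_word {h : W} (hh : h ∈ WP cs Θ) :
    ∃ ω : List B, (∀ b ∈ ω, b ∈ Θ) ∧ cs.wordProd ω = h := by
  induction hh using Subgroup.closure_induction with
  | mem x hx =>
    obtain ⟨β, hβ, rfl⟩ := hx
    exact ⟨[β], by simpa using hβ, by simp [cs.wordProd_cons]⟩
  | one => exact ⟨[], by simp, cs.wordProd_nil⟩
  | mul x y hx hy ihx ihy =>
    obtain ⟨ω₁, h₁, hp₁⟩ := ihx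
    obtain ⟨ω₂, h₂, hp₂⟩ := ihy
    refine ⟨ω₁ ++ ω₂, ?_, by rw [cs.wordProd_append, hp₁, hp₂]⟩
    intro b hb
    rcases List.mem_append.mp hb with h | h
    · exact h₁ b h
    · exact h₂ b h
  | inv x hx ihx =>
    obtain ⟨ω, h₁, hp⟩ := ihx
    exact ⟨ω.reverse, fun b hb => h₁ b (List.mem_reverse.mp hb),
      by rw [cs.wordProd_reverse, hp]⟩

/-- Minimal length of a `Θ`-word representing `h`. -/
noncomputable def tlen (h : W) : ℕ :=
  sInf {n | ∃ ω : List B, ω.length = n ∧ (∀ b ∈ ω, b ∈ Θ) ∧ cs.wordProd ω = h}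

theorem tlen_spec {h : W} (hh : h ∈ WP cs Θ) :
    ∃ ω : List B, ω.length = tlen cs Θ h ∧ (∀ b ∈ ω, b ∈ Θ) ∧ cs.wordProd ω = h := by
  have hne : {n | ∃ ω : List B, ω.length = n ∧ (∀ b ∈ ω, b ∈ Θ) ∧ cs.wordProd ω = h}.Nonempty := by
    obtain ⟨ω, h₁, h₂⟩ := exists_theta_word cs Θ hh
    exact ⟨ω.length, ω, rfl, h₁, h₂⟩
  obtain ⟨ω, h₁, h₂, h₃⟩ := Nat.sInf_mem hne
  exact ⟨ω, h₁, h₂, h₃⟩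

theorem tlen_le {ω : List B} (hω : ∀ b ∈ ω, b ∈ Θ) :
    tlen cs Θ (cs.wordProd ω) ≤ ω.length :=
  Nat.sInf_le ⟨ω, rfl, hω, rfl⟩

/-- `u` has minimal length in the right coset `(WP cs Θ) * u`. -/
def IsMinRep (u : W) : Prop :=
  ∀ x : W, x * u⁻¹ ∈ WP cs Θ → cs.length u ≤ cs.length x

/-- Key additivity property: if `u` is of minimal length in its coset and `h ∈ W_Θ`,
then `ℓ(h u) = ℓ_Θ(h) + ℓ(u)`. -/
theorem tlen_add : ∀ n : ℕ, ∀ h u : W, h ∈ WP cs Θ → tlen cs Θ h = n →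
    IsMinRep cs Θ u → cs.length (h * u) = n + cs.length u := by
  intro n
  induction n using Nat.strong_induction_on with
  | _ n ih =>
  intro h u hh htl hmin
  obtain ⟨ω, hlen, hΘ, hprod⟩ := tlen_spec cs Θ hh
  rw [htl] at hlen
  cases ω with
  | nil =>
    have h1 : h = 1 := by rw [← hprod, cs.wordProd_nil]
    have h0 : n = 0 := by simpa using hlen.symm
    rw [h1, one_mul, h0, zero_add]
  | cons β ω' =>
    have hn : n = ω'.length + 1 := by simpa [add_comm] using hlen.symm
    have hΘ' : ∀ b ∈ ω', b ∈ Θ := fun b hb => hΘ b (by simp [hb])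
    have hh' : cs.wordProd ω' ∈ WP cs Θ := wordProd_mem_WP cs Θ hΘ'
    set h' := cs.wordProd ω' with hh'def
    have hsplit : h = cs.simple β * h' := by rw [← hprod, cs.wordProd_cons]
    have htl' : tlen cs Θ h' = ω'.length := by
      refine le_antisymm (tlen_le cs Θ hΘ') ?_
      by_contra hlt
      push_neg at hlt
      obtain ⟨μ, hμlen, hμΘ, hμprod⟩ := tlen_spec cs Θ hh'
      have hword : cs.wordProd (β :: μ) = h := by
        rw [cs.wordProd_cons, hμprod, ← hsplit]
      have : tlen cs Θ h ≤ μ.length + 1 := by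
        have := tlen_le cs Θ (ω := β :: μ)
          (by intro b hb; rcases List.mem_cons.mp hb with h | h;
              · exact h ▸ hΘ β (by simp)
              · exact hμΘ b h)
        rw [hword] at this
        simpa using this
      omega
    have hlt' : ω'.length < n := by omega
    have hmain := ih ω'.length hlt' h' u hh' htl' hmin
    have hlenh' : cs.length h' = ω'.length := by
      have h1 := ih ω'.length hlt' h' 1 hh' htl'
        (fun x _ => by simp [cs.length_one])
      simpa using h1
    rcases cs.length_simple_mul (h' * u) β with hasc | hdesc
    · rw [hsplit, mul_assoc, hasc, hmain, hn]
      omega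
    · exfalso
      have hdesc' : cs.IsLeftDescent (h' * u) β := by
        rw [CoxeterSystem.IsLeftDescent]
        omega
      obtain ⟨ω₂, hlen2, hprod2⟩ := cs.exists_reduced_word u
      have hl2 : cs.length u = ω₂.length := by rw [hprod2]; exact hlen2
      have happrod : cs.wordProd (ω' ++ ω₂) = h' * u := by
        rw [cs.wordProd_append, ← hprod2]
      have hred : cs.IsReduced (ω' ++ ω₂) := by
        rw [CoxeterSystem.IsReduced, happrod, hmain, List.length_append, hl2]
      have hdesc2 : cs.IsLeftDescent (cs.wordProd (ω' ++ ω₂)) β := by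
        rwa [happrod]
      obtain ⟨j, hj, hex⟩ := exchange cs hred hdesc2
      rw [List.length_append] at hj
      rw [happrod] at hex
      by_cases hcase : j < ω'.length
      · rw [List.eraseIdx_append_of_lt_length hcase, cs.wordProd_append, ← hprod2] at hex
        have hex2 : cs.simple β * h' = cs.wordProd (ω'.eraseIdx j) := by
          have := hex
          rw [← mul_assoc] at this
          exact mul_right_cancel this
        have htlle : tlen cs Θ h ≤ (ω'.eraseIdx j).length := by
          have := tlen_le cs Θ (ω := ω'.eraseIdx j)
            (fun b hb => hΘ' b ((ω'.eraseIdx_sublist j).mem hb))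
          rwa [← hex2, ← hsplit] at this
        have : (ω'.eraseIdx j).length = ω'.length - 1 := by
          rw [List.length_eraseIdx]
          simp [hcase]
        omega
      · push_neg at hcase
        rw [List.eraseIdx_append_of_length_le hcase, cs.wordProd_append] at hex
        set x := cs.wordProd (ω₂.eraseIdx (j - ω'.length)) with hxdef
        have hx : x = h'⁻¹ * (cs.simple β * (h' * u)) := by
          rw [hex, ← hh'def]
          group
        have hmem : x * u⁻¹ ∈ WP cs Θ := by
          have : x * u⁻¹ = h'⁻¹ * cs.simple β * h' := by rw [hx]; group
          rw [this]
          exact mul_mem (mul_mem (inv_mem hh') (simple_mem_WP cs Θ (hΘ β (by simp)))) hh'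
        have hle : cs.length u ≤ cs.length x := hmin x hmem
        have hxlen : cs.length x ≤ (ω₂.eraseIdx (j - ω'.length)).length :=
          cs.length_wordProd_le _
        have hjlt : j - ω'.length < ω₂.length := by omega
        have : (ω₂.eraseIdx (j - ω'.length)).length = ω₂.length - 1 := by
          rw [List.length_eraseIdx]
          simp [hjlt]
        omega

theorem length_eq_tlen {h : W} (hh : h ∈ WP cs Θ) : cs.length h = tlen cs Θ h := by
  have h1 := tlen_add cs Θ (tlen cs Θ h) h 1 hh rfl (fun x _ => by simp [cs.length_one])
  simpa using h1

theorem length_WP_add {h u : W} (hh : h ∈ WP cs Θ) (hmin : IsMinRep cs Θ u) :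
    cs.length (h * u) = cs.length h + cs.length u := by
  rw [length_eq_tlen cs Θ hh]
  exact tlen_add cs Θ _ h u hh rfl hmin

theorem minrep_unique {x u : W} (hx : x * u⁻¹ ∈ WP cs Θ) (hmin : IsMinRep cs Θ u)
    (hlen : cs.length x = cs.length u) : x = u := by
  have hxu : x = (x * u⁻¹) * u := by group
  have hadd := length_WP_add cs Θ hx hmin
  rw [← hxu] at hadd
  have h0 : cs.length (x * u⁻¹) = 0 := by omega
  have h1 : x * u⁻¹ = 1 := cs.length_eq_zero_iff.mp h0
  calc x = (x * u⁻¹) * u := hxu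
  _ = u := by rw [h1, one_mul]

end parabolic

section coset

variable {B W : Type} [Group W] {M : CoxeterMatrix B} (cs : CoxeterSystem M W) (Θ : Set B)

theorem rcMk_eq_iff (x u : W) :
    rcMk (WP cs Θ) x = rcMk (WP cs Θ) u ↔ x * u⁻¹ ∈ WP cs Θ := by
  rw [rcMk, rcMk, Quotient.eq]
  show (QuotientGroup.rightRel (WP cs Θ)) x u ↔ _
  rw [QuotientGroup.rightRel_apply]
  constructor
  · intro h
    have := inv_mem h
    simpa using this
  · intro h
    have := inv_mem h
    simpa using this

theorem sAct_mk (x : W) (α : B) :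
    sAct cs Θ (rcMk (WP cs Θ) x) α = rcMk (WP cs Θ) (x * cs.simple α) := rfl

theorem sAct_sAct (C : RightCoset (WP cs Θ)) (α : B) :
    sAct cs Θ (sAct cs Θ C α) α = C := by
  obtain ⟨x, rfl⟩ := Quotient.exists_rep C
  show sAct cs Θ (sAct cs Θ (rcMk (WP cs Θ) x) α) α = rcMk (WP cs Θ) x
  rw [sAct_mk, sAct_mk, cs.simple_mul_simple_cancel_right]

theorem exists_minrep (C : RightCoset (WP cs Θ)) :
    ∃ u : W, rcMk (WP cs Θ) u = C ∧ IsMinRep cs Θ u := by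
  obtain ⟨x₀, rfl⟩ := Quotient.exists_rep C
  have hx₀ : rcMk (WP cs Θ) x₀ = Quotient.mk _ x₀ := rfl
  set S : Set ℕ := {n | ∃ x : W, rcMk (WP cs Θ) x = Quotient.mk _ x₀ ∧ cs.length x = n} with hS
  have hne : S.Nonempty := ⟨cs.length x₀, x₀, rfl, rfl⟩
  obtain ⟨u, hu, hulen⟩ := Nat.sInf_mem hne
  refine ⟨u, hu, ?_⟩
  intro x hx
  have hmk : rcMk (WP cs Θ) x = Quotient.mk _ x₀ := by
    rw [(rcMk_eq_iff cs Θ x u).mpr hx, hu]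
  have : cs.length x ∈ S := ⟨x, hmk, rfl⟩
  rw [hulen]
  exact Nat.sInf_le this

theorem length_lt_of_BruhatLT {x y : W} (h : BruhatLT cs x y) :
    cs.length x < cs.length y := by
  induction h with
  | single h => exact h.2
  | tail _ h ih => exact lt_trans ih h.2

variable (wc : RightCoset (WP cs Θ) → W)
  (hmem : ∀ C, rcMk (WP cs Θ) (wc C) = C)
  (hmax : ∀ C x, rcMk (WP cs Θ) x = C → cs.length x ≤ cs.length (wc C))
  (huniq : ∀ C x, rcMk (WP cs Θ) x = C → cs.length x = cs.length (wc C) → x = wc C)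

include hmem hmax huniq

theorem wc_inj {C D : RightCoset (WP cs Θ)} (h : wc C = wc D) : C = D := by
  rw [← hmem C, ← hmem D, h]

omit huniq in
theorem wc_one_mem : wc (rcMk (WP cs Θ) 1) ∈ WP cs Θ := by
  have h := hmem (rcMk (WP cs Θ) 1)
  have := (rcMk_eq_iff cs Θ _ 1).mp h
  simpa using this

theorem wc_formula {C : RightCoset (WP cs Θ)} {u : W} (hu : rcMk (WP cs Θ) u = C)
    (humin : IsMinRep cs Θ u) :
    wc C = wc (rcMk (WP cs Θ) 1) * u ∧
      cs.length (wc C) = cs.length (wc (rcMk (WP cs Θ) 1)) + cs.length u := by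
  set h₀ := wc (rcMk (WP cs Θ) 1) with hh₀
  have hh₀mem : h₀ ∈ WP cs Θ := wc_one_mem cs Θ wc hmem hmax
  have hadd : cs.length (h₀ * u) = cs.length h₀ + cs.length u :=
    length_WP_add cs Θ hh₀mem humin
  have hrep : rcMk (WP cs Θ) (h₀ * u) = C := by
    rw [← hu, rcMk_eq_iff]
    simpa using hh₀mem
  have hmaxlen : ∀ x, rcMk (WP cs Θ) x = C → cs.length x ≤ cs.length (h₀ * u) := by
    intro x hx
    have hxu : x * u⁻¹ ∈ WP cs Θ := by
      rw [← rcMk_eq_iff cs Θ x u, hu]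
      exact hx
    have hx2 : x = (x * u⁻¹) * u := by group
    have hx3 : cs.length x = cs.length (x * u⁻¹) + cs.length u := by
      conv_lhs => rw [hx2]
      exact length_WP_add cs Θ hxu humin
    have hle : cs.length (x * u⁻¹) ≤ cs.length h₀ := by
      apply hmax (rcMk (WP cs Θ) 1)
      rw [rcMk_eq_iff]
      simpa using hxu
    omega
  have h1 : cs.length (h₀ * u) = cs.length (wc C) := by
    have := hmaxlen (wc C) (hmem C)
    have := hmax C (h₀ * u) hrep
    omega
  have h2 : h₀ * u = wc C := huniq C (h₀ * u) hrep h1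
  exact ⟨h2.symm, by rw [← h2, hadd]⟩

/-- Key structural result: if `Cs_α ≠ C` then the longest representative of `Cs_α`
is `w^C s_α`, and `u s_α` is minimal in `Cs_α` whenever `u` is minimal in `C`. -/
theorem wc_sAct {C : RightCoset (WP cs Θ)} {u : W} (hu : rcMk (WP cs Θ) u = C)
    (humin : IsMinRep cs Θ u) {α : B} (hne : sAct cs Θ C α ≠ C) :
    wc (sAct cs Θ C α) = wc C * cs.simple α ∧ IsMinRep cs Θ (u * cs.simple α) ∧
      rcMk (WP cs Θ) (u * cs.simple α) = sAct cs Θ C α := by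
  obtain ⟨u', hu', humin'⟩ := exists_minrep cs Θ (sAct cs Θ C α)
  have hus : rcMk (WP cs Θ) (u * cs.simple α) = sAct cs Θ C α := by
    rw [← hu, sAct_mk]
  have hu's : rcMk (WP cs Θ) (u' * cs.simple α) = C := by
    rw [← sAct_sAct cs Θ C α, ← hu', sAct_mk]
  -- u' is in the coset of u * s
  have hrel : (u * cs.simple α) * u'⁻¹ ∈ WP cs Θ := by
    rw [← rcMk_eq_iff cs Θ, hus, hu']
  have hrel' : (u' * cs.simple α) * u⁻¹ ∈ WP cs Θ := by
    rw [← rcMk_eq_iff cs Θ, hu's, hu]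
  have hle : cs.length u' ≤ cs.length (u * cs.simple α) := humin' _ hrel
  have hle' : cs.length u ≤ cs.length (u' * cs.simple α) := humin _ hrel'
  have hsb : cs.length (u' * cs.simple α) ≤ cs.length u' + 1 := by
    have := cs.length_mul_le u' (cs.simple α)
    rwa [cs.length_simple] at this
  have hkey : u * cs.simple α = u' := by
    rcases cs.length_mul_simple u α with hasc | hdesc
    · -- ℓ(us) = ℓu + 1
      rcases lt_trichotomy (cs.length u') (cs.length u) with hlt | heqq | hgt
      · -- impossible
        exfalso
        have h1 : cs.length (u' * cs.simple α) = cs.length u := by omega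
        have h2 : u' * cs.simple α = u := minrep_unique cs Θ hrel' humin h1
        have h3 : u' = u * cs.simple α := by
          rw [← h2, cs.simple_mul_simple_cancel_right]
        rw [h3, hasc] at hlt
        omega
      · -- impossible, via the exchange property
        exfalso
        have h1 : cs.length (u' * cs.simple α) = cs.length u + 1 := by
          rcases cs.length_mul_simple u' α with h | h
          · omega
          · exfalso
            have h2 : cs.length (u' * cs.simple α) = cs.length u := by omega
            have h3 : u' * cs.simple α = u := minrep_unique cs Θ hrel' humin h2
            have h4 : u' = u * cs.simple α := by
              rw [← h3, cs.simple_mul_simple_cancel_right]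
            rw [h4, hasc] at heqq
            omega
        -- write u' s = h * u with h ∈ W_Θ of length 1
        have h5 : cs.length ((u' * cs.simple α) * u⁻¹) = 1 := by
          have h6 : u' * cs.simple α = ((u' * cs.simple α) * u⁻¹) * u := by group
          have h7 : cs.length (u' * cs.simple α)
              = cs.length ((u' * cs.simple α) * u⁻¹) + cs.length u := by
            conv_lhs => rw [h6]
            exact length_WP_add cs Θ hrel' humin
          omega
        obtain ⟨γ, hγ⟩ := cs.length_eq_one_iff.mp h5
        -- γ is a left descent of x := u' * s
        have hx : cs.simple γ * (u' * cs.simple α) = u := by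
          have : (u' * cs.simple α) * u⁻¹ = cs.simple γ := hγ.symm ▸ rfl
          calc cs.simple γ * (u' * cs.simple α)
              = cs.simple γ * (cs.simple γ * u) := by
                rw [← this]; group
          _ = u := cs.simple_mul_simple_cancel_left γ
        obtain ⟨ω', hω'len, hω'prod⟩ := cs.exists_reduced_word u'
        have hω'l : cs.length u' = ω'.length := by rw [hω'prod]; exact hω'len
        have hxword : cs.wordProd (ω' ++ [α]) = u' * cs.simple α := by
          rw [cs.wordProd_append, ← hω'prod]
          congr 1
          simp [cs.wordProd_cons]
        have hxred : cs.IsReduced (ω' ++ [α]) := by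
          rw [CoxeterSystem.IsReduced, hxword, h1, List.length_append]
          simp
          omega
        have hxdesc : cs.IsLeftDescent (cs.wordProd (ω' ++ [α])) γ := by
          rw [CoxeterSystem.IsLeftDescent, hxword, hx, h1]
          omega
        obtain ⟨j, hj, hex⟩ := exchange cs hxred hxdesc
        rw [hxword, hx] at hex
        rw [List.length_append] at hj
        by_cases hcase : j < ω'.length
        · rw [List.eraseIdx_append_of_lt_length hcase, cs.wordProd_append] at hex
          have h8 : u * cs.simple α = cs.wordProd (ω'.eraseIdx j) := by
            rw [hex]
            have : cs.wordProd [α] = cs.simple α := by simp [cs.wordProd_cons]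
            rw [this, cs.simple_mul_simple_cancel_right]
          have h9 : cs.length (u * cs.simple α) ≤ ω'.length - 1 := by
            rw [h8]
            have := cs.length_wordProd_le (ω'.eraseIdx j)
            have hlen9 : (ω'.eraseIdx j).length = ω'.length - 1 := by
              rw [List.length_eraseIdx]
              simp [hcase]
            omega
          omega
        · push_neg at hcase
          rw [List.eraseIdx_append_of_length_le hcase] at hex
          have hj0 : j - ω'.length = 0 := by
            simp at hj
            omega
          rw [hj0] at hex
          have : ([α].eraseIdx 0) = ([] : List B) := rfl
          rw [this, List.append_nil] at hex
          -- u = u', contradicting C ≠ Cs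
          rw [← hω'prod] at hex
          apply hne
          rw [← hu', ← hu, hex]
      · -- ℓ u' = ℓ u + 1 = ℓ (u s α): uniqueness
        have h1 : cs.length (u * cs.simple α) = cs.length u' := by omega
        exact minrep_unique cs Θ hrel humin' h1
    · -- ℓ(us) + 1 = ℓ u  (descent)
      have h1 : cs.length u' ≤ cs.length u - 1 := by omega
      have h2 : cs.length u ≤ cs.length u' + 1 := le_trans hle' hsb
      have h3 : cs.length (u * cs.simple α) = cs.length u' := by omega
      exact minrep_unique cs Θ hrel humin' h3
  -- conclude
  have hform1 := wc_formula cs Θ wc hmem hmax huniq hu humin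
  have hform' := wc_formula cs Θ wc hmem hmax huniq hu' humin'
  refine ⟨?_, hkey ▸ humin', hus⟩
  rw [hform'.1, hform1.1, ← hkey, mul_assoc]

/-- For any coset `D` with `Ds_α ≠ D`, the lengths of the longest representatives
of `D` and `Ds_α` differ by exactly one. -/
theorem sAct_length_dichotomy (D : RightCoset (WP cs Θ)) (α : B)
    (hne : sAct cs Θ D α ≠ D) :
    cs.length (wc (sAct cs Θ D α)) = cs.length (wc D) + 1 ∨
      cs.length (wc (sAct cs Θ D α)) + 1 = cs.length (wc D) := by
  obtain ⟨u, hu, humin⟩ := exists_minrep cs Θ D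
  have h := (wc_sAct cs Θ wc hmem hmax huniq hu humin hne).1
  rw [h]
  exact cs.length_mul_simple (wc D) α

/-- In the step case we can choose a simple reflection giving a strictly smaller coset. -/
theorem descent_case {C : RightCoset (WP cs Θ)} {u : W} (hu : rcMk (WP cs Θ) u = C)
    (humin : IsMinRep cs Θ u) (hune : u ≠ 1) :
    ∃ α : B, sAct cs Θ C α ≠ C ∧ wc (sAct cs Θ C α) = wc C * cs.simple α ∧
      cs.length (wc (sAct cs Θ C α)) + 1 = cs.length (wc C) ∧
      BruhatLT cs (wc (sAct cs Θ C α)) (wc C) ∧ sAct cs Θ (sAct cs Θ C α) α = C := by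
  obtain ⟨α, hα⟩ := cs.exists_rightDescent_of_ne_one hune
  rw [CoxeterSystem.IsRightDescent] at hα
  have hne : sAct cs Θ C α ≠ C := by
    intro h
    have hrep : rcMk (WP cs Θ) (u * cs.simple α) = C := by
      rw [← h, ← hu, sAct_mk]
    have := humin (u * cs.simple α) (by rw [← rcMk_eq_iff cs Θ _ u, hrep, hu])
    omega
  obtain ⟨hwc, husmin, husrep⟩ := wc_sAct cs Θ wc hmem hmax huniq hu humin hne
  have hlen1 := (wc_formula cs Θ wc hmem hmax huniq hu humin).2
  have hlen2 := (wc_formula cs Θ wc hmem hmax huniq husrep husmin).2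
  have hus : cs.length (u * cs.simple α) + 1 = cs.length u := by
    rcases cs.length_mul_simple u α with h | h
    · omega
    · omega
  have hlen : cs.length (wc (sAct cs Θ C α)) + 1 = cs.length (wc C) := by omega
  refine ⟨α, hne, hwc, hlen, ?_, sAct_sAct cs Θ C α⟩
  apply Relation.TransGen.single
  constructor
  · refine ⟨cs.simple α, cs.isReflection_simple α, ?_⟩
    rw [hwc, cs.simple_mul_simple_cancel_right]
  · omega

/-- The coset of `1` is minimal: no coset lies strictly below it in the Bruhat order. -/
theorem no_lower {C : RightCoset (WP cs Θ)} (hC : rcMk (WP cs Θ) (1 : W) = C)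
    (D : RightCoset (WP cs Θ)) : ¬ BruhatLT cs (wc D) (wc C) := by
  intro hlt
  have h1 : IsMinRep cs Θ (1 : W) := fun x _ => by simp [cs.length_one]
  have hlenC := (wc_formula cs Θ wc hmem hmax huniq hC h1).2
  obtain ⟨v, hv, hvmin⟩ := exists_minrep cs Θ D
  have hlenD := (wc_formula cs Θ wc hmem hmax huniq hv hvmin).2
  have := length_lt_of_BruhatLT cs hlt
  rw [cs.length_one] at hlenC
  omega

end coset

section laurent

/-- Coefficient of a product with `T e`. -/
theorem mul_T_coeff (p : LaurentPolynomial ℤ) (e n : ℤ) :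
    (p * (LaurentPolynomial.T e : LaurentPolynomial ℤ)).coeff n = p.coeff (n - e) := by
  rw [show (LaurentPolynomial.T e : LaurentPolynomial ℤ) = AddMonoidAlgebra.single e 1 from rfl]
  rw [AddMonoidAlgebra.coeff_mul_single_apply]
  simp [sub_eq_add_neg]

theorem one_coeff (n : ℤ) : (1 : LaurentPolynomial ℤ).coeff n = if n = 0 then 1 else 0 := by
  rw [show (1 : LaurentPolynomial ℤ) = AddMonoidAlgebra.single 0 1 from rfl,
    AddMonoidAlgebra.coeff_single, Finsupp.single_apply]
  simp [eq_comm]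

end laurent

end StmtAux

/-- (Parity of Whittaker Kazhdan–Lusztig polynomials.)
If `φ : W_Θ\W → H_Θ` satisfies conditions (i) and (ii) of the Whittaker
Kazhdan–Lusztig algorithm, then each coefficient polynomial `P_{CD}` satisfies
`P_{CD} = q^{ℓ(w^C) − ℓ(w^D)} Q_{CD}` with `Q_{CD} ∈ ℤ[q²,q⁻²]`; equivalently, every
coefficient of `P_{CD}` in a degree not congruent to `ℓ(w^C) − ℓ(w^D)` mod 2 vanishes. -/
theorem stmt2 [Finite W] {M : CoxeterMatrix B} (cs : CoxeterSystem M W) (Θ : Set B)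
    (wc : RightCoset (WP cs Θ) → W)
    (hmem : ∀ C, rcMk (WP cs Θ) (wc C) = C)
    (hmax : ∀ C x, rcMk (WP cs Θ) x = C → cs.length x ≤ cs.length (wc C))
    (huniq : ∀ C x, rcMk (WP cs Θ) x = C → cs.length x = cs.length (wc C) → x = wc C)
    (φ : RightCoset (WP cs Θ) → (RightCoset (WP cs Θ) →₀ LaurentPolynomial ℤ))
    -- condition (i)
    (hφ1 : ∀ C, (φ C) C = 1 ∧
      ∀ D, D ≠ C → (φ C) D ≠ 0 → BruhatLT cs (wc D) (wc C) ∧ InQZq ((φ C) D))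
    -- condition (ii)
    (hφ2 : ∀ (α : B) (C : RightCoset (WP cs Θ)),
      BruhatLT cs (wc (sAct cs Θ C α)) (wc C) →
      ∃ c : RightCoset (WP cs Θ) →₀ ℤ,
        (∀ D ∈ c.support, BruhatLE cs (wc D) (wc C)) ∧
        Tmap cs (sAct cs Θ) wc α (φ (sAct cs Θ C α)) = c.sum fun D n => n • φ D) :
    ∀ (C D : RightCoset (WP cs Θ)) (n : ℤ),
      Odd (n - ((cs.length (wc C) : ℤ) - (cs.length (wc D) : ℤ))) → ((φ C) D).coeff n = 0 := by
  suffices key : ∀ N : ℕ, ∀ C, cs.length (wc C) = N →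
      ∀ D n, Odd (n - ((cs.length (wc C) : ℤ) - (cs.length (wc D) : ℤ))) → ((φ C) D).coeff n = 0 by
    intro C D n hodd
    exact key (cs.length (wc C)) C rfl D n hodd
  intro N
  induction N using Nat.strong_induction_on with
  | _ N ih =>
  intro C hNC D n hodd
  obtain ⟨u, hu, humin⟩ := StmtAux.exists_minrep cs Θ C
  by_cases hu1 : u = 1
  · -- base case: C is the minimal coset
    subst hu1
    by_cases hDC : D = C
    · subst hDC
      rw [(hφ1 D).1, StmtAux.one_coeff]
      have hn0 : n ≠ 0 := by
        rw [Int.odd_iff] at hodd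
        intro h
        subst h
        omega
      simp [hn0]
    · by_contra hne0
      have hφne : (φ C) D ≠ 0 := by
        intro h
        apply hne0
        rw [h]
        rfl
      have hblt := ((hφ1 C).2 D hDC hφne).1
      exact StmtAux.no_lower cs Θ wc hmem hmax huniq hu D hblt
  · -- inductive step
    obtain ⟨α, hne, hwcE, hlenE, hblt, hinvol⟩ :=
      StmtAux.descent_case cs Θ wc hmem hmax huniq hu humin hu1
    set E := sAct cs Θ C α with hE
    obtain ⟨c, hsupp, heq⟩ := hφ2 α C hblt
    have ihE : ∀ D' m, Odd (m - ((cs.length (wc E) : ℤ) - (cs.length (wc D') : ℤ))) →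
        ((φ E) D').coeff m = 0 := ih (cs.length (wc E)) (by omega) E rfl
    have hCE : C ≠ E := by
      intro h
      rw [← h] at hlenE
      omega
    have hEC0 : (φ E) C = 0 := by
      by_contra h
      have h2 := ((hφ1 E).2 C hCE h).1
      have := StmtAux.length_lt_of_BruhatLT cs h2
      omega
    -- Claim 1: parity of the coefficients of `T_α (φ E)`.
    have claim1 : ∀ F m, Odd (m - ((cs.length (wc C) : ℤ) - (cs.length (wc F) : ℤ))) →
        (((Tmap cs (sAct cs Θ) wc α) (φ E)) F).coeff m = 0 := by
      intro F m hOdd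
      rw [Tmap, Finsupp.linearCombination_apply, Finsupp.sum_apply, AddMonoidAlgebra.coeff_finsuppSum, Finsupp.sum_apply]
      apply Finset.sum_eq_zero
      intro D' _
      beta_reduce
      by_cases h1 : sAct cs Θ D' α = D'
      · rw [if_pos h1]
        simp
      · rw [if_neg h1]
        have hdich := StmtAux.sAct_length_dichotomy cs Θ wc hmem hmax huniq D' α h1
        have hcore : ∀ e : ℤ, e = 1 ∨ e = -1 →
            (((φ E) D' • ((LaurentPolynomial.T e : LaurentPolynomial ℤ) •
                Finsupp.single D' (1 : LaurentPolynomial ℤ) +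
              Finsupp.single (sAct cs Θ D' α) (1 : LaurentPolynomial ℤ))) F).coeff m = 0 := by
          intro e he
          rw [Finsupp.smul_apply, Finsupp.add_apply, Finsupp.smul_apply,
            Finsupp.single_apply, Finsupp.single_apply]
          by_cases hDF : D' = F
          · subst hDF
            rw [if_pos rfl, if_neg h1]
            rw [smul_eq_mul, smul_eq_mul, mul_one, add_zero]
            rw [StmtAux.mul_T_coeff]
            apply ihE
            rw [Int.odd_iff] at hOdd ⊢
            rcases he with rfl | rfl <;> omega
          · rw [if_neg hDF]
            by_cases hD'F : sAct cs Θ D' α = F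
            · rw [if_pos hD'F, smul_eq_mul, smul_eq_mul, mul_zero, zero_add, mul_one]
              apply ihE
              rw [← hD'F] at hOdd
              rw [Int.odd_iff] at hOdd ⊢
              rcases hdich with h | h <;> omega
            · rw [if_neg hD'F]
              simp
        by_cases h2 : BruhatLT cs (wc D') (wc (sAct cs Θ D' α))
        · rw [if_pos h2]
          exact hcore 1 (Or.inl rfl)
        · rw [if_neg h2]
          exact hcore (-1) (Or.inr rfl)
    -- Claim 2: the coefficient of `T_α (φ E)` at `C` in degree `0` is `1`.
    have claim2 : (((Tmap cs (sAct cs Θ) wc α) (φ E)) C).coeff 0 = 1 := by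
      rw [Tmap, Finsupp.linearCombination_apply, Finsupp.sum_apply, AddMonoidAlgebra.coeff_finsuppSum, Finsupp.sum_apply]
      rw [Finsupp.sum_eq_single E]
      · beta_reduce
        rw [(hφ1 E).1]
        have hEne : ¬ sAct cs Θ E α = E := by
          rw [hinvol]
          exact hCE
        rw [if_neg hEne, hinvol, if_pos hblt]
        rw [one_smul, Finsupp.add_apply, Finsupp.smul_apply]
        rw [Finsupp.single_eq_of_ne (show C ≠ E from hCE), Finsupp.single_eq_same]
        rw [smul_zero, zero_add, StmtAux.one_coeff]
        simp
      · intro D' hD'ne0 hD'ne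
        beta_reduce
        by_cases h1 : sAct cs Θ D' α = D'
        · rw [if_pos h1]
          simp
        · rw [if_neg h1]
          by_cases hD'C : D' = C
          · subst hD'C
            exact absurd hEC0 hD'ne0
          · have hD'sC : ¬ sAct cs Θ D' α = C := by
              intro h
              apply hD'ne
              rw [hE, ← h, StmtAux.sAct_sAct]
            have hval : ∀ e : ℤ,
                ((((φ E) D') • ((LaurentPolynomial.T e : LaurentPolynomial ℤ) •
                    Finsupp.single D' (1 : LaurentPolynomial ℤ) +
                  Finsupp.single (sAct cs Θ D' α) (1 : LaurentPolynomial ℤ))) C).coeff 0 = 0 := by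
              intro e
              rw [Finsupp.smul_apply, Finsupp.add_apply, Finsupp.smul_apply,
                Finsupp.single_apply, Finsupp.single_apply, if_neg hD'C, if_neg hD'sC]
              simp
            by_cases h2 : BruhatLT cs (wc D') (wc (sAct cs Θ D' α))
            · rw [if_pos h2]
              exact hval 1
            · rw [if_neg h2]
              exact hval (-1)
      · intro _
        beta_reduce
        simp
    -- transfer to the coefficients `c`
    have hRHS : ∀ (F : RightCoset (WP cs Θ)) (m : ℤ),
        ((c.sum fun D' k => k • φ D') F).coeff m = c.sum fun D' k => k • (((φ D') F).coeff m) := by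
      intro F m
      rw [Finsupp.sum_apply, AddMonoidAlgebra.coeff_finsuppSum, Finsupp.sum_apply]
      apply Finsupp.sum_congr
      intro D' _
      rw [Finsupp.smul_apply, AddMonoidAlgebra.coeff_smul_apply]
    have hcC : c C = 1 := by
      have h1 : ((c.sum fun D' k => k • φ D') C).coeff 0 = c C := by
        rw [hRHS]
        rw [Finsupp.sum_eq_single C]
        · beta_reduce
          rw [(hφ1 C).1, StmtAux.one_coeff]
          simp
        · intro D' hD'ne0 hD'ne
          beta_reduce
          have : ((φ D') C).coeff 0 = 0 := by
            by_cases hz : (φ D') C = 0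
            · rw [hz]
              rfl
            · exact ((hφ1 D').2 C (fun h => hD'ne h.symm) hz).2 0 le_rfl
          rw [this]
          simp
        · intro h
          simp
      rw [← heq] at h1
      rw [claim2] at h1
      exact h1.symm
    have hczero : ∀ D₀, D₀ ≠ C → Odd ((cs.length (wc C) : ℤ) - (cs.length (wc D₀) : ℤ)) →
        c D₀ = 0 := by
      intro D₀ hD₀C hoddD₀
      have h1 : ((c.sum fun D' k => k • φ D') D₀).coeff 0 = c D₀ := by
        rw [hRHS]
        rw [Finsupp.sum_eq_single D₀]
        · beta_reduce
          rw [(hφ1 D₀).1, StmtAux.one_coeff]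
          simp
        · intro D' hD'ne0 hD'ne
          beta_reduce
          have hz0 : ((φ D') D₀).coeff 0 = 0 := by
            by_cases hz : (φ D') D₀ = 0
            · rw [hz]
              rfl
            · exact ((hφ1 D').2 D₀ (fun h => hD'ne h.symm) hz).2 0 le_rfl
          rw [hz0]
          simp
        · intro h
          simp
      rw [← heq] at h1
      have h2 := claim1 D₀ 0 (by rw [Int.odd_iff] at hoddD₀ ⊢; omega)
      rw [h2] at h1
      exact h1.symm
    -- final computation
    have hfin : ((c.sum fun D' k => k • φ D') D).coeff n = ((φ C) D).coeff n := by
      rw [hRHS]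
      rw [Finsupp.sum_eq_single C]
      · beta_reduce
        rw [hcC, one_smul]
      · intro D' hD'ne0 hD'ne
        beta_reduce
        have hin : D' ∈ c.support := Finsupp.mem_support_iff.mpr hD'ne0
        have hle := hsupp D' hin
        have hlt : BruhatLT cs (wc D') (wc C) := by
          rcases hle with h | h
          · exact h
          · exact absurd (StmtAux.wc_inj cs Θ wc hmem hmax huniq h) hD'ne
        have hltlen := StmtAux.length_lt_of_BruhatLT cs hlt
        have hnotodd : ¬ Odd ((cs.length (wc C) : ℤ) - (cs.length (wc D') : ℤ)) := by
          intro h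
          exact hD'ne0 (hczero D' hD'ne h)
        have hz := ih (cs.length (wc D')) (by omega) D' rfl D n (by
          rw [Int.odd_iff] at hodd ⊢
          rw [Int.odd_iff] at hnotodd
          omega)
        rw [hz]
        simp
      · intro h
        simp
    rw [← hfin, ← heq]
    exact claim1 D n hodd

end
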